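/- (Optimality certificate for errors-and-erasures convex program.) Let Φ ⊆ [n₁]×[n₂], A* supported on Ω ⊆ Φ, B* low-rank with SVD UΣVᵀ and tangent space T, and Γ = Φ∖Ω. Suppose Γᶜ ∩ T = {0} and there exists Q ∈ ℝ^{n₁×n₂} with P_{Φᶜ}(Q) = 0, P_T(Q) = UVᵀ, ‖P_{T⊥}(Q)‖ < 1, P_{Γᶜ}(Q) = γ·P_Φ(sgn(A*)), and ‖P_Γ(Q)‖_∞ < γ. Then (P_Φ(A*), B*) is the unique optimal solution of: minimize γ‖A‖₁ + ‖B‖_* subject to P_Φ(A+B) = P_Φ(A*+B*). -/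

import Mathlib

open Matrix

noncomputable section

def frobNorm {m n : ℕ} (M : Matrix (Fin m) (Fin n) ℝ) : ℝ :=
  Real.sqrt (∑ i, ∑ j, (M i j) ^ 2)

def infNorm {m n : ℕ} (M : Matrix (Fin m) (Fin n) ℝ) : ℝ :=
  ⨆ i, ⨆ j, |M i j|

def specNorm {m n : ℕ} (M : Matrix (Fin m) (Fin n) ℝ) : ℝ :=
  ‖LinearMap.toContinuousLinearMap (Matrix.toEuclideanLin M)‖

open Classical in
def projSet {m n : ℕ} (S : Set (Fin m × Fin n)) (M : Matrix (Fin m) (Fin n) ℝ) :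
    Matrix (Fin m) (Fin n) ℝ :=
  Matrix.of fun i j => if (i, j) ∈ S then M i j else 0

def projT {n₁ n₂ r : ℕ} (U : Matrix (Fin n₁) (Fin r) ℝ) (V : Matrix (Fin n₂) (Fin r) ℝ)
    (M : Matrix (Fin n₁) (Fin n₂) ℝ) : Matrix (Fin n₁) (Fin n₂) ℝ :=
  U * Uᵀ * M + M * (V * Vᵀ) - U * Uᵀ * M * (V * Vᵀ)

def finner {m n : ℕ} (A B : Matrix (Fin m) (Fin n) ℝ) : ℝ := ∑ i, ∑ j, A i j * B i j

def opNormF {m n : ℕ} (A : Matrix (Fin m) (Fin n) ℝ →ₗ[ℝ] Matrix (Fin m) (Fin n) ℝ) : ℝ :=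
  sInf {c | 0 ≤ c ∧ ∀ Z, frobNorm (A Z) ≤ c * frobNorm Z}

open Classical in
def projSetL {m n : ℕ} (S : Set (Fin m × Fin n)) :
    Matrix (Fin m) (Fin n) ℝ →ₗ[ℝ] Matrix (Fin m) (Fin n) ℝ where
  toFun := projSet S
  map_add' A B := by
    funext i j
    simp only [projSet, Matrix.of_apply, Matrix.add_apply]
    split <;> simp
  map_smul' c A := by
    funext i j
    simp only [projSet, Matrix.of_apply, Matrix.smul_apply, RingHom.id_apply, smul_eq_mul]
    split <;> simp

open Classical in
def rowCount {m n : ℕ} (S : Set (Fin m × Fin n)) (i : Fin m) : ℕ :=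
  (Finset.univ.filter fun j => (i, j) ∈ S).card

open Classical in
def colCount {m n : ℕ} (S : Set (Fin m × Fin n)) (j : Fin n) : ℕ :=
  (Finset.univ.filter fun i => (i, j) ∈ S).card

def alphaP (μ : ℝ) (r d n₁ n₂ : ℕ) : ℝ :=
  Real.sqrt (μ * r * d / n₁) + Real.sqrt (μ * r * d / n₂) +
    Real.sqrt (μ * r * d / (max n₁ n₂ : ℕ))

def sgnM {m n : ℕ} (M : Matrix (Fin m) (Fin n) ℝ) : Matrix (Fin m) (Fin n) ℝ :=
  Matrix.of fun i j => Real.sign (M i j)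

def l1Norm {m n : ℕ} (M : Matrix (Fin m) (Fin n) ℝ) : ℝ := ∑ i, ∑ j, |M i j|

def nuclearNorm {m n : ℕ} (M : Matrix (Fin m) (Fin n) ℝ) : ℝ :=
  ∑ i, Real.sqrt ((show (Mᵀ * M).IsHermitian by
    simpa [Matrix.conjTranspose_eq_transpose_of_trivial] using
      Matrix.isHermitian_conjTranspose_mul_self M).eigenvalues i)

lemma isHermitian_transpose_mul_self' {m n : ℕ} (M : Matrix (Fin m) (Fin n) ℝ) :
    (Mᵀ * M).IsHermitian := by
  simpa [Matrix.conjTranspose_eq_transpose_of_trivial] using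
    Matrix.isHermitian_conjTranspose_mul_self M

-- ===== auxiliary library =====

def ev {n : ℕ} (v : Fin n → ℝ) : EuclideanSpace ℝ (Fin n) := (WithLp.equiv 2 _).symm v

lemma ev_inner {n : ℕ} (a b : Fin n → ℝ) : inner ℝ (ev a) (ev b) = a ⬝ᵥ b := by
  simp [ev, PiLp.inner_apply, dotProduct, mul_comm, RCLike.inner_apply]

lemma ev_norm_sq {n : ℕ} (a : Fin n → ℝ) : ‖ev a‖ ^ 2 = a ⬝ᵥ a := by
  rw [← real_inner_self_eq_norm_sq, ev_inner]

lemma toEuclideanLin_ev {m n : ℕ} (M : Matrix (Fin m) (Fin n) ℝ) (v : Fin n → ℝ) :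
    Matrix.toEuclideanLin M (ev v) = ev (M *ᵥ v) := by
  simp [ev, Matrix.toEuclideanLin_toLp]

lemma specNorm_nonneg {m n : ℕ} (M : Matrix (Fin m) (Fin n) ℝ) : 0 ≤ specNorm M :=
  norm_nonneg _

lemma mulVec_norm_le {m n : ℕ} (M : Matrix (Fin m) (Fin n) ℝ) (v : Fin n → ℝ) :
    ‖ev (M *ᵥ v)‖ ≤ specNorm M * ‖ev v‖ := by
  rw [← toEuclideanLin_ev]
  exact (LinearMap.toContinuousLinearMap (Matrix.toEuclideanLin M)).le_opNorm (ev v)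

lemma dot_mulVec_le {m n : ℕ} (M : Matrix (Fin m) (Fin n) ℝ) (u : Fin m → ℝ) (v : Fin n → ℝ) :
    u ⬝ᵥ (M *ᵥ v) ≤ specNorm M * (‖ev u‖ * ‖ev v‖) := by
  calc u ⬝ᵥ (M *ᵥ v) = inner ℝ (ev u) (ev (M *ᵥ v)) := (ev_inner _ _).symm
    _ ≤ ‖ev u‖ * ‖ev (M *ᵥ v)‖ := real_inner_le_norm _ _
    _ ≤ ‖ev u‖ * (specNorm M * ‖ev v‖) := by
        exact mul_le_mul_of_nonneg_left (mulVec_norm_le M v) (norm_nonneg _)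
    _ = _ := by ring

lemma specNorm_le_one {m n : ℕ} (M : Matrix (Fin m) (Fin n) ℝ)
    (h : ∀ v : Fin n → ℝ, (M *ᵥ v) ⬝ᵥ (M *ᵥ v) ≤ v ⬝ᵥ v) : specNorm M ≤ 1 := by
  apply ContinuousLinearMap.opNorm_le_bound _ zero_le_one
  intro x
  have hx : x = ev (WithLp.equiv 2 _ x) := rfl
  rw [one_mul]
  have h2 : ‖LinearMap.toContinuousLinearMap (Matrix.toEuclideanLin M) x‖ ^ 2 ≤ ‖x‖ ^ 2 := by
    rw [hx]
    show ‖Matrix.toEuclideanLin M _‖ ^ 2 ≤ _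
    rw [toEuclideanLin_ev, ev_norm_sq, ev_norm_sq]
    exact h _
  nlinarith [norm_nonneg (LinearMap.toContinuousLinearMap (Matrix.toEuclideanLin M) x), norm_nonneg x]



section SVD
variable {m n : ℕ} (M : Matrix (Fin m) (Fin n) ℝ)

def eig (j : Fin n) : ℝ := (isHermitian_transpose_mul_self' M).eigenvalues j
def sv (j : Fin n) : ℝ := Real.sqrt (eig M j)
def rsv (j : Fin n) : Fin n → ℝ := ⇑((isHermitian_transpose_mul_self' M).eigenvectorBasis j)
def lsv (j : Fin n) : Fin m → ℝ := (sv M j)⁻¹ • (M *ᵥ rsv M j)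

lemma nuclearNorm_eq_sum_sv : nuclearNorm M = ∑ j, sv M j := rfl

lemma rsv_dot (j k : Fin n) : rsv M j ⬝ᵥ rsv M k = if j = k then 1 else 0 := by
  have h := orthonormal_iff_ite.mp
    (isHermitian_transpose_mul_self' M).eigenvectorBasis.orthonormal j k
  rw [dotProduct_comm]
  simpa [PiLp.inner_apply, RCLike.inner_apply, dotProduct, rsv] using h

lemma gram_mulVec (j : Fin n) : (Mᵀ * M) *ᵥ rsv M j = eig M j • rsv M j :=
  (isHermitian_transpose_mul_self' M).mulVec_eigenvectorBasis j

lemma Mrsv_dot (j k : Fin n) :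
    (M *ᵥ rsv M j) ⬝ᵥ (M *ᵥ rsv M k) = if j = k then eig M k else 0 := by
  rw [Matrix.dotProduct_mulVec, ← Matrix.mulVec_transpose, Matrix.mulVec_mulVec, gram_mulVec,
    smul_dotProduct, rsv_dot]
  by_cases h : j = k <;> simp [h, smul_eq_mul]

lemma eig_nonneg (j : Fin n) : 0 ≤ eig M j := by
  have := Mrsv_dot M j j
  simp at this
  rw [← this, dotProduct]
  exact Finset.sum_nonneg fun i _ => mul_self_nonneg _

lemma sv_nonneg (j : Fin n) : 0 ≤ sv M j := Real.sqrt_nonneg _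

lemma sv_sq (j : Fin n) : sv M j ^ 2 = eig M j := Real.sq_sqrt (eig_nonneg M j)

lemma sv_eq_zero_iff (j : Fin n) : sv M j = 0 ↔ eig M j = 0 := by
  constructor
  · intro h; rw [← sv_sq M j, h]; ring
  · intro h; rw [sv, h, Real.sqrt_zero]

lemma mulVec_rsv_eq_zero (j : Fin n) (h : eig M j = 0) : M *ᵥ rsv M j = 0 := by
  have h2 := Mrsv_dot M j j
  simp [h] at h2
  exact h2

lemma lsv_eq_zero (j : Fin n) (h : eig M j = 0) : lsv M j = 0 := by
  rw [lsv, mulVec_rsv_eq_zero M j h, smul_zero]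

lemma mul_rsv_eq (j : Fin n) : M *ᵥ rsv M j = sv M j • lsv M j := by
  by_cases h : eig M j = 0
  · rw [mulVec_rsv_eq_zero M j h, lsv_eq_zero M j h, smul_zero]
  · have hs : sv M j ≠ 0 := fun hc => h ((sv_eq_zero_iff M j).mp hc)
    rw [lsv, smul_smul, mul_inv_cancel₀ hs, one_smul]

lemma lsv_dot (j k : Fin n) :
    lsv M j ⬝ᵥ lsv M k = if j = k then (if eig M j = 0 then 0 else 1) else 0 := by
  by_cases hj : eig M j = 0
  · simp [lsv_eq_zero M j hj, hj, zero_dotProduct]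
  by_cases hk : eig M k = 0
  · have : j ≠ k := fun hc => hj (hc ▸ hk)
    simp [lsv_eq_zero M k hk, this, dotProduct_zero]
  rw [lsv, lsv, smul_dotProduct, dotProduct_smul, Mrsv_dot]
  by_cases hjk : j = k
  · subst hjk
    have hs : sv M j ≠ 0 := fun hc => hj ((sv_eq_zero_iff M j).mp hc)
    rw [← sv_sq M j] at *
    simp [hj, smul_eq_mul]
    field_simp
  · simp [hjk, hj]

lemma rsv_complete (l k : Fin n) : ∑ j, rsv M j l * rsv M j k = if l = k then 1 else 0 := by
  classical
  set P : Matrix (Fin n) (Fin n) ℝ :=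
    ((isHermitian_transpose_mul_self' M).eigenvectorUnitary : Matrix (Fin n) (Fin n) ℝ)
  have hmem := ((isHermitian_transpose_mul_self' M).eigenvectorUnitary).2
  have h1 : P * star P = 1 := (Matrix.mem_unitaryGroup_iff).mp hmem
  have hstar : star P = Pᵀ := by
    rw [Matrix.star_eq_conjTranspose]
    ext i j
    simp [Matrix.conjTranspose_apply]
  rw [hstar] at h1
  have := congrFun (congrFun h1 l) k
  simp only [Matrix.mul_apply, Matrix.transpose_apply, Matrix.one_apply] at this
  rw [← this]
  apply Finset.sum_congr rfl
  intro j _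
  have hPij : ∀ i, P i j = rsv M j i := fun i => rfl
  rw [hPij l, hPij k]

lemma svd_decomp : M = ∑ j, sv M j • Matrix.vecMulVec (lsv M j) (rsv M j) := by
  funext i k
  have hsum : (∑ j, sv M j • Matrix.vecMulVec (lsv M j) (rsv M j)) i k
      = ∑ j, sv M j * (lsv M j i * rsv M j k) := by
    simp [Matrix.sum_apply, Matrix.vecMulVec_apply]
  rw [hsum]
  have key : ∀ j, sv M j * (lsv M j i * rsv M j k) = (M *ᵥ rsv M j) i * rsv M j k := by
    intro j
    have := congrFun (mul_rsv_eq M j) i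
    simp only [Pi.smul_apply, smul_eq_mul] at this
    rw [← mul_assoc, ← this]
  simp_rw [key]
  have expand : ∀ j, (M *ᵥ rsv M j) i * rsv M j k = ∑ l, M i l * (rsv M j l * rsv M j k) := by
    intro j; rw [Matrix.mulVec, dotProduct, Finset.sum_mul]
    exact Finset.sum_congr rfl fun l _ => by ring
  simp_rw [expand]
  rw [Finset.sum_comm]
  have hl : ∀ l, ∑ j, M i l * (rsv M j l * rsv M j k) = M i l * if l = k then 1 else 0 :=
    fun l => by rw [← Finset.mul_sum, rsv_complete]
  simp_rw [hl]
  simp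

end SVD


section finnerLemmas
variable {m n : ℕ}

lemma finner_comm (A B : Matrix (Fin m) (Fin n) ℝ) : finner A B = finner B A := by
  unfold finner; congr 1; funext i; congr 1; funext j; ring

lemma finner_add_right (A B C : Matrix (Fin m) (Fin n) ℝ) :
    finner A (B + C) = finner A B + finner A C := by
  unfold finner
  rw [← Finset.sum_add_distrib]
  congr 1; funext i
  rw [← Finset.sum_add_distrib]
  congr 1; funext j
  simp [Matrix.add_apply]; ring

lemma finner_sub_right (A B C : Matrix (Fin m) (Fin n) ℝ) :
    finner A (B - C) = finner A B - finner A C := by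
  unfold finner
  rw [← Finset.sum_sub_distrib]
  congr 1; funext i
  rw [← Finset.sum_sub_distrib]
  congr 1; funext j
  simp [Matrix.sub_apply]; ring

lemma finner_add_left (A B C : Matrix (Fin m) (Fin n) ℝ) :
    finner (A + B) C = finner A C + finner B C := by
  rw [finner_comm, finner_add_right, finner_comm C A, finner_comm C B]

lemma finner_sub_left (A B C : Matrix (Fin m) (Fin n) ℝ) :
    finner (A - B) C = finner A C - finner B C := by
  rw [finner_comm, finner_sub_right, finner_comm C A, finner_comm C B]

lemma finner_zero_right (A : Matrix (Fin m) (Fin n) ℝ) : finner A 0 = 0 := by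
  unfold finner; simp

lemma finner_zero_left (A : Matrix (Fin m) (Fin n) ℝ) : finner 0 A = 0 := by
  rw [finner_comm, finner_zero_right]

lemma finner_sum_right {ι : Type*} (s : Finset ι) (A : Matrix (Fin m) (Fin n) ℝ)
    (f : ι → Matrix (Fin m) (Fin n) ℝ) :
    finner A (∑ i ∈ s, f i) = ∑ i ∈ s, finner A (f i) := by
  classical
  induction s using Finset.induction with
  | empty => simp [finner_zero_right]
  | insert _ _ h ih => rw [Finset.sum_insert h, finner_add_right, ih, Finset.sum_insert h]

lemma finner_smul_right (c : ℝ) (A B : Matrix (Fin m) (Fin n) ℝ) :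
    finner A (c • B) = c * finner A B := by
  unfold finner
  rw [Finset.mul_sum]
  congr 1; funext i
  rw [Finset.mul_sum]
  congr 1; funext j
  simp [Matrix.smul_apply, smul_eq_mul]; ring

lemma finner_vecMulVec_right (X : Matrix (Fin m) (Fin n) ℝ) (a : Fin m → ℝ) (b : Fin n → ℝ) :
    finner X (Matrix.vecMulVec a b) = a ⬝ᵥ (X *ᵥ b) := by
  unfold finner
  rw [dotProduct]
  congr 1; funext i
  rw [Matrix.mulVec, dotProduct, Finset.mul_sum]
  congr 1; funext j
  simp [Matrix.vecMulVec_apply]; ring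

lemma finner_vecMulVec_vecMulVec (a c : Fin m → ℝ) (b d : Fin n → ℝ) :
    finner (Matrix.vecMulVec a b) (Matrix.vecMulVec c d) = (a ⬝ᵥ c) * (b ⬝ᵥ d) := by
  unfold finner
  simp only [Matrix.vecMulVec_apply, dotProduct]
  rw [Finset.sum_mul_sum]
  congr 1; funext i
  congr 1; funext j
  ring

lemma finner_trace (A B : Matrix (Fin m) (Fin n) ℝ) : finner A B = Matrix.trace (Aᵀ * B) := by
  unfold finner Matrix.trace
  simp only [Matrix.diag_apply, Matrix.mul_apply, Matrix.transpose_apply]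
  rw [Finset.sum_comm]

lemma finner_mul_left_assoc (P : Matrix (Fin m) (Fin n) ℝ) {k : ℕ}
    (A : Matrix (Fin m) (Fin k) ℝ) (B : Matrix (Fin k) (Fin n) ℝ) :
    finner (A * B) P = finner B (Aᵀ * P) := by
  rw [finner_trace, finner_trace, Matrix.transpose_mul, Matrix.mul_assoc]

lemma finner_mul_right_assoc (P : Matrix (Fin m) (Fin n) ℝ) {k : ℕ}
    (A : Matrix (Fin m) (Fin k) ℝ) (B : Matrix (Fin k) (Fin n) ℝ) :
    finner (A * B) P = finner A (P * Bᵀ) := by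
  rw [finner_trace, finner_trace, Matrix.transpose_mul, Matrix.mul_assoc,
    ← Matrix.trace_mul_comm, Matrix.mul_assoc]

end finnerLemmas

section small
variable {m n : ℕ}

lemma dot_sum_right {ι : Type*} (s : Finset ι) (v : Fin m → ℝ) (f : ι → Fin m → ℝ) :
    v ⬝ᵥ (∑ j ∈ s, f j) = ∑ j ∈ s, v ⬝ᵥ f j := by
  classical
  induction s using Finset.induction with
  | empty => simp
  | insert _ _ h ih => rw [Finset.sum_insert h, dotProduct_add, ih, Finset.sum_insert h]

lemma sum_dot_left {ι : Type*} (s : Finset ι) (v : Fin m → ℝ) (f : ι → Fin m → ℝ) :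
    (∑ j ∈ s, f j) ⬝ᵥ v = ∑ j ∈ s, f j ⬝ᵥ v := by
  classical
  induction s using Finset.induction with
  | empty => simp
  | insert _ _ h ih => rw [Finset.sum_insert h, add_dotProduct, ih, Finset.sum_insert h]

lemma sum_mulVec' {ι : Type*} (s : Finset ι) (f : ι → Matrix (Fin m) (Fin n) ℝ) (w : Fin n → ℝ) :
    (∑ j ∈ s, f j) *ᵥ w = ∑ j ∈ s, (f j *ᵥ w) := by
  classical
  induction s using Finset.induction with
  | empty => simp [Matrix.zero_mulVec]
  | insert _ _ h ih => rw [Finset.sum_insert h, Matrix.add_mulVec, ih, Finset.sum_insert h]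

lemma vecMulVec_mulVec' (a : Fin m → ℝ) (b : Fin n → ℝ) (w : Fin n → ℝ) :
    Matrix.vecMulVec a b *ᵥ w = (b ⬝ᵥ w) • a := by
  funext i
  simp only [Matrix.mulVec, dotProduct, Matrix.vecMulVec_apply, Pi.smul_apply, smul_eq_mul]
  rw [Finset.sum_mul]
  apply Finset.sum_congr rfl; intro j _; ring

lemma mul_vecMulVec {k : ℕ} (A : Matrix (Fin k) (Fin m) ℝ) (a : Fin m → ℝ) (b : Fin n → ℝ) :
    A * Matrix.vecMulVec a b = Matrix.vecMulVec (A *ᵥ a) b := by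
  funext i j
  simp [Matrix.mul_apply, Matrix.vecMulVec_apply, Matrix.mulVec, dotProduct, Finset.sum_mul]
  apply Finset.sum_congr rfl; intro l _; ring

lemma vecMulVec_mul {k : ℕ} (a : Fin m → ℝ) (b : Fin n → ℝ) (A : Matrix (Fin n) (Fin k) ℝ) :
    Matrix.vecMulVec a b * A = Matrix.vecMulVec a (Aᵀ *ᵥ b) := by
  funext i j
  simp [Matrix.mul_apply, Matrix.vecMulVec_apply, Matrix.mulVec, dotProduct, Finset.mul_sum,
    Matrix.transpose_apply]
  apply Finset.sum_congr rfl; intro l _; ring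

lemma vecMulVec_zero_left (b : Fin n → ℝ) : Matrix.vecMulVec (0 : Fin m → ℝ) b = 0 := by
  funext i j; simp [Matrix.vecMulVec_apply]

end small

section Duality
variable {m n : ℕ} (M : Matrix (Fin m) (Fin n) ℝ)

lemma ev_norm_le_one_of_dot {a : Fin m → ℝ} (h : a ⬝ᵥ a ≤ 1) : ‖ev a‖ ≤ 1 := by
  nlinarith [ev_norm_sq a, norm_nonneg (ev a)]

lemma nuclearNorm_nonneg : 0 ≤ nuclearNorm M := by
  rw [nuclearNorm_eq_sum_sv]
  exact Finset.sum_nonneg fun j _ => sv_nonneg M j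

lemma specNorm_mul_dot_le (X : Matrix (Fin m) (Fin n) ℝ) {a : Fin m → ℝ} {b : Fin n → ℝ}
    (ha : a ⬝ᵥ a ≤ 1) (hb : b ⬝ᵥ b ≤ 1) : a ⬝ᵥ (X *ᵥ b) ≤ specNorm X := by
  calc a ⬝ᵥ (X *ᵥ b) ≤ specNorm X * (‖ev a‖ * ‖ev b‖) := dot_mulVec_le X a b
    _ ≤ specNorm X * 1 := by
        apply mul_le_mul_of_nonneg_left _ (specNorm_nonneg X)
        calc ‖ev a‖ * ‖ev b‖ ≤ 1 * 1 := by
              apply mul_le_mul (ev_norm_le_one_of_dot ha) (ev_norm_le_one_of_dot hb)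
                (norm_nonneg _) zero_le_one
          _ = 1 := by ring
    _ = specNorm X := mul_one _

lemma finner_le_spec_nuc (X : Matrix (Fin m) (Fin n) ℝ) :
    finner X M ≤ specNorm X * nuclearNorm M := by
  conv_lhs => rw [svd_decomp M]
  rw [finner_sum_right]
  rw [nuclearNorm_eq_sum_sv, Finset.mul_sum]
  apply Finset.sum_le_sum
  intro j _
  rw [finner_smul_right, finner_vecMulVec_right]
  rw [mul_comm (specNorm X) (sv M j)]
  apply mul_le_mul_of_nonneg_left _ (sv_nonneg M j)
  apply specNorm_mul_dot_le
  · rw [lsv_dot]; simp; split <;> norm_num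
  · rw [rsv_dot]; simp

lemma nuclearNorm_eq_zero_imp (h : nuclearNorm M = 0) : M = 0 := by
  rw [nuclearNorm_eq_sum_sv] at h
  have hz : ∀ j ∈ Finset.univ, sv M j = 0 :=
    (Finset.sum_eq_zero_iff_of_nonneg fun j _ => sv_nonneg M j).mp h
  rw [svd_decomp M]
  apply Finset.sum_eq_zero
  intro j _
  rw [hz j (Finset.mem_univ j), zero_smul]

def dualW : Matrix (Fin m) (Fin n) ℝ := ∑ j, Matrix.vecMulVec (lsv M j) (rsv M j)

lemma finner_dualW_self : finner (dualW M) M = nuclearNorm M := by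
  have key : ∀ k, finner (dualW M) (sv M k • Matrix.vecMulVec (lsv M k) (rsv M k)) = sv M k := by
    intro k
    have inner_eq : finner (dualW M) (Matrix.vecMulVec (lsv M k) (rsv M k))
        = if eig M k = 0 then 0 else 1 := by
      rw [dualW, finner_comm, finner_sum_right]
      have hj : ∀ j, finner (Matrix.vecMulVec (lsv M k) (rsv M k))
          (Matrix.vecMulVec (lsv M j) (rsv M j))
          = if k = j then (if eig M k = 0 then 0 else 1) else 0 := by
        intro j
        rw [finner_vecMulVec_vecMulVec, lsv_dot, rsv_dot]
        by_cases hjk : k = j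
        · subst hjk; simp
        · rw [if_neg hjk, if_neg hjk, zero_mul]
      simp_rw [hj]
      rw [Finset.sum_ite_eq]
      simp
    rw [finner_smul_right, inner_eq]
    by_cases hk : eig M k = 0
    · simp [hk, (sv_eq_zero_iff M k).mpr hk]
    · simp [hk]
  calc finner (dualW M) M
      = finner (dualW M) (∑ k, sv M k • Matrix.vecMulVec (lsv M k) (rsv M k)) := by
        congr 1; exact svd_decomp M
    _ = ∑ k, sv M k := by
        rw [finner_sum_right]; exact Finset.sum_congr rfl fun k _ => key k
    _ = nuclearNorm M := (nuclearNorm_eq_sum_sv M).symm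

variable {r : ℕ} (U : Matrix (Fin m) (Fin r) ℝ) (V : Matrix (Fin n) (Fin r) ℝ)

lemma Ut_mulVec_lsv (hUM : Uᵀ * M = 0) (j : Fin n) : Uᵀ *ᵥ lsv M j = 0 := by
  rw [lsv, Matrix.mulVec_smul, Matrix.mulVec_mulVec, hUM, Matrix.zero_mulVec, smul_zero]

lemma Vt_mulVec_rsv (hMV : M * V = 0) (j : Fin n) (hej : eig M j ≠ 0) :
    Vᵀ *ᵥ rsv M j = 0 := by
  have h1 : Vᵀ * (Mᵀ * M) = 0 := by
    have : Vᵀ * Mᵀ = 0 := by rw [← Matrix.transpose_mul, hMV, Matrix.transpose_zero]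
    rw [← Matrix.mul_assoc, this, Matrix.zero_mul]
  have h2 := congrArg (fun x => Vᵀ *ᵥ x) (gram_mulVec M j)
  simp only [Matrix.mulVec_mulVec, h1, Matrix.zero_mulVec, Matrix.mulVec_smul] at h2
  have := h2.symm
  rwa [smul_eq_zero_iff_right hej] at this

lemma Ut_mul_dualW (hUM : Uᵀ * M = 0) : Uᵀ * dualW M = 0 := by
  rw [dualW, Matrix.mul_sum]
  apply Finset.sum_eq_zero
  intro j _
  rw [mul_vecMulVec, Ut_mulVec_lsv M U hUM, vecMulVec_zero_left]

lemma dualW_mul_V (hMV : M * V = 0) : dualW M * V = 0 := by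
  rw [dualW, Matrix.sum_mul]
  apply Finset.sum_eq_zero
  intro j _
  rw [vecMulVec_mul]
  by_cases hej : eig M j = 0
  · rw [lsv_eq_zero M j hej, vecMulVec_zero_left]
  · rw [Vt_mulVec_rsv M V hMV j hej]
    funext a b; simp [Matrix.vecMulVec_apply]

lemma mulVec_dot {m n : ℕ} (A : Matrix (Fin m) (Fin n) ℝ) (a : Fin n → ℝ) (u : Fin m → ℝ) :
    (A *ᵥ a) ⬝ᵥ u = a ⬝ᵥ (Aᵀ *ᵥ u) := by
  rw [dotProduct_comm, Matrix.dotProduct_mulVec, ← Matrix.mulVec_transpose,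
    dotProduct_comm]

lemma spec_UVW_le_one (hU : Uᵀ * U = 1) (hV : Vᵀ * V = 1)
    (hUM : Uᵀ * M = 0) (hMV : M * V = 0) :
    specNorm (U * Vᵀ + dualW M) ≤ 1 := by
  apply specNorm_le_one
  intro w
  set a : Fin r → ℝ := Vᵀ *ᵥ w with ha
  set c : Fin n → ℝ := fun j => rsv M j ⬝ᵥ w with hc
  set ε : Fin n → ℝ := fun j => if eig M j = 0 then 0 else 1 with hε
  have hεsq : ∀ j, ε j * ε j = ε j := by
    intro j; by_cases h : eig M j = 0 <;> simp [hε, h]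
  have hlsv_dot' : ∀ j k, lsv M j ⬝ᵥ lsv M k = if j = k then ε j else 0 := by
    intro j k; rw [lsv_dot]
  -- z = (U*Vᵀ + dualW M) *ᵥ w
  have hz : (U * Vᵀ + dualW M) *ᵥ w = U *ᵥ a + ∑ j, c j • lsv M j := by
    rw [Matrix.add_mulVec, ← Matrix.mulVec_mulVec, dualW, sum_mulVec']
    congr 1
    apply Finset.sum_congr rfl
    intro j _
    rw [vecMulVec_mulVec']
  rw [hz]
  -- compute z ⬝ z
  have hUa : (U *ᵥ a) ⬝ᵥ (U *ᵥ a) = a ⬝ᵥ a := by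
    rw [Matrix.dotProduct_mulVec, ← Matrix.mulVec_transpose, Matrix.mulVec_mulVec, hU,
      Matrix.one_mulVec]
  have hcross : ∀ j, (U *ᵥ a) ⬝ᵥ (c j • lsv M j) = 0 := by
    intro j
    rw [dotProduct_smul, mulVec_dot, Ut_mulVec_lsv M U hUM]
    simp
  have hSS : (∑ j, c j • lsv M j) ⬝ᵥ (∑ j, c j • lsv M j) = ∑ j, ε j * (c j * c j) := by
    rw [sum_dot_left]
    apply Finset.sum_congr rfl
    intro j _
    rw [smul_dotProduct, dot_sum_right]
    have hterm : ∀ k, lsv M j ⬝ᵥ (c k • lsv M k) = if j = k then c k * ε j else 0 := by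
      intro k; rw [dotProduct_smul, hlsv_dot']
      by_cases h : j = k <;> simp [h]
    simp_rw [hterm]
    rw [Finset.sum_ite_eq]
    simp only [Finset.mem_univ, if_true, smul_eq_mul]
    ring
  have hzz : (U *ᵥ a + ∑ j, c j • lsv M j) ⬝ᵥ (U *ᵥ a + ∑ j, c j • lsv M j)
      = a ⬝ᵥ a + ∑ j, ε j * (c j * c j) := by
    rw [add_dotProduct, dotProduct_add, dotProduct_add, hUa, hSS]
    rw [dot_sum_right]
    simp_rw [hcross]
    rw [dotProduct_comm (∑ j, c j • lsv M j) (U *ᵥ a), dot_sum_right]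
    simp_rw [hcross]
    simp
  rw [hzz]
  -- the Bessel bound
  set y : Fin n → ℝ := V *ᵥ a + ∑ j, (ε j * c j) • rsv M j with hy
  have hVa : (V *ᵥ a) ⬝ᵥ (V *ᵥ a) = a ⬝ᵥ a := by
    rw [Matrix.dotProduct_mulVec, ← Matrix.mulVec_transpose, Matrix.mulVec_mulVec, hV,
      Matrix.one_mulVec]
  have hVrsv : ∀ j, (V *ᵥ a) ⬝ᵥ ((ε j * c j) • rsv M j) = 0 := by
    intro j
    rw [dotProduct_smul, mulVec_dot]
    by_cases hej : eig M j = 0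
    · rw [hε]; simp [hej]
    · rw [Vt_mulVec_rsv M V hMV j hej]; simp
  have hwy : w ⬝ᵥ y = a ⬝ᵥ a + ∑ j, ε j * (c j * c j) := by
    rw [hy, dotProduct_add, dot_sum_right]
    congr 1
    · rw [Matrix.dotProduct_mulVec w V a, ← Matrix.mulVec_transpose, ← ha]
    · apply Finset.sum_congr rfl
      intro j _
      rw [dotProduct_smul]
      rw [dotProduct_comm w (rsv M j)]
      have hc' : rsv M j ⬝ᵥ w = c j := rfl
      rw [hc']
      simp; ring
  have hyy : y ⬝ᵥ y = a ⬝ᵥ a + ∑ j, ε j * (c j * c j) := by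
    rw [hy, add_dotProduct, dotProduct_add, dotProduct_add, hVa]
    rw [dot_sum_right]
    simp_rw [hVrsv]
    rw [sum_dot_left]
    have h1 : ∀ j, ((ε j * c j) • rsv M j) ⬝ᵥ (V *ᵥ a) = 0 := by
      intro j
      rw [dotProduct_comm]
      exact hVrsv j
    simp_rw [h1]
    have h2 : (∑ j, (ε j * c j) • rsv M j) ⬝ᵥ (∑ j, (ε j * c j) • rsv M j)
        = ∑ j, ε j * (c j * c j) := by
      rw [sum_dot_left]
      apply Finset.sum_congr rfl
      intro j _
      rw [smul_dotProduct, dot_sum_right]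
      have hterm2 : ∀ k, rsv M j ⬝ᵥ ((ε k * c k) • rsv M k)
          = if j = k then ε k * c k else 0 := by
        intro k; rw [dotProduct_smul, rsv_dot]
        by_cases h : j = k <;> simp [h]
      simp_rw [hterm2]
      rw [Finset.sum_ite_eq]
      simp only [Finset.mem_univ, if_true, smul_eq_mul]
      calc ε j * c j * (ε j * c j) = (ε j * ε j) * (c j * c j) := by ring
        _ = ε j * (c j * c j) := by rw [hεsq]
    rw [h2]
    simp
  have hpos : (0:ℝ) ≤ (w - y) ⬝ᵥ (w - y) := by
    rw [dotProduct]
    exact Finset.sum_nonneg fun i _ => mul_self_nonneg _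
  have hexp : (w - y) ⬝ᵥ (w - y) = w ⬝ᵥ w - 2 * (w ⬝ᵥ y) + y ⬝ᵥ y := by
    rw [sub_dotProduct, dotProduct_sub, dotProduct_sub,
      dotProduct_comm y w]
    ring
  rw [hexp, hwy, hyy] at hpos
  linarith

end Duality


section Subgrad
variable {m n r : ℕ} (U : Matrix (Fin m) (Fin r) ℝ) (V : Matrix (Fin n) (Fin r) ℝ)

lemma dualW_zero : dualW (0 : Matrix (Fin m) (Fin n) ℝ) = 0 := by
  rw [dualW]
  apply Finset.sum_eq_zero
  intro j _
  have : lsv (0 : Matrix (Fin m) (Fin n) ℝ) j = 0 := by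
    rw [lsv, Matrix.zero_mulVec, smul_zero]
  rw [this, vecMulVec_zero_left]

lemma spec_dualW_le_one (M : Matrix (Fin m) (Fin n) ℝ) : specNorm (dualW M) ≤ 1 := by
  have h := spec_UVW_le_one M (0 : Matrix (Fin m) (Fin 0) ℝ) (0 : Matrix (Fin n) (Fin 0) ℝ)
    (by ext i j; exact i.elim0) (by ext i j; exact i.elim0)
    (by ext i j; exact i.elim0) (by ext i j; exact j.elim0)
  rwa [show (0 : Matrix (Fin m) (Fin 0) ℝ) * (0 : Matrix (Fin n) (Fin 0) ℝ)ᵀ = 0 by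
    ext i j; simp [Matrix.mul_apply], zero_add] at h

lemma spec_UV_le_one (hU : Uᵀ * U = 1) (hV : Vᵀ * V = 1) : specNorm (U * Vᵀ) ≤ 1 := by
  have h := spec_UVW_le_one (0 : Matrix (Fin m) (Fin n) ℝ) U V hU hV
    (by rw [Matrix.mul_zero]) (by rw [Matrix.zero_mul])
  rwa [dualW_zero, add_zero] at h

lemma UDV_eq_sum (σ : Fin r → ℝ) :
    U * Matrix.diagonal σ * Vᵀ
      = ∑ k, σ k • Matrix.vecMulVec (fun i => U i k) (fun j => V j k) := by
  funext i j
  rw [Matrix.sum_apply]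
  rw [Matrix.mul_apply]
  have : ∀ l, (U * Matrix.diagonal σ) i l * Vᵀ l j = U i l * σ l * V j l := by
    intro l
    rw [Matrix.mul_diagonal, Matrix.transpose_apply]
  simp_rw [this]
  apply Finset.sum_congr rfl
  intro k _
  simp [Matrix.vecMulVec_apply, smul_eq_mul]
  ring

lemma col_dot_le_one {k : ℕ} (A : Matrix (Fin k) (Fin r) ℝ) (hA : Aᵀ * A = 1) (l : Fin r) :
    (fun i => A i l) ⬝ᵥ (fun i => A i l) ≤ 1 := by
  have : (fun i => A i l) ⬝ᵥ (fun i => A i l) = (Aᵀ * A) l l := by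
    simp [Matrix.mul_apply, dotProduct, Matrix.transpose_apply]
  rw [this, hA, Matrix.one_apply_eq]

lemma finner_X_UDV_le (σ : Fin r → ℝ) (hσ : ∀ k, 0 ≤ σ k)
    (hU : Uᵀ * U = 1) (hV : Vᵀ * V = 1)
    (X : Matrix (Fin m) (Fin n) ℝ) (hX : specNorm X ≤ 1) :
    finner X (U * Matrix.diagonal σ * Vᵀ) ≤ ∑ k, σ k := by
  rw [UDV_eq_sum, finner_sum_right]
  apply Finset.sum_le_sum
  intro k _
  rw [finner_smul_right, finner_vecMulVec_right]
  calc σ k * ((fun i => U i k) ⬝ᵥ (X *ᵥ fun j => V j k)) ≤ σ k * specNorm X := by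
        apply mul_le_mul_of_nonneg_left _ (hσ k)
        exact specNorm_mul_dot_le X (col_dot_le_one U hU k) (col_dot_le_one V hV k)
    _ ≤ σ k * 1 := mul_le_mul_of_nonneg_left hX (hσ k)
    _ = σ k := mul_one _

lemma finner_UV_UDV (σ : Fin r → ℝ) (hU : Uᵀ * U = 1) (hV : Vᵀ * V = 1) :
    finner (U * Vᵀ) (U * Matrix.diagonal σ * Vᵀ) = ∑ k, σ k := by
  rw [finner_trace, Matrix.transpose_mul, Matrix.transpose_transpose]
  have h1 : V * Uᵀ * (U * Matrix.diagonal σ * Vᵀ) = V * (Matrix.diagonal σ * Vᵀ) := by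
    rw [Matrix.mul_assoc U, ← Matrix.mul_assoc (V * Uᵀ), Matrix.mul_assoc V, hU,
      Matrix.mul_one]
  rw [h1, Matrix.trace_mul_comm, Matrix.mul_assoc, hV, Matrix.mul_one, Matrix.trace_diagonal]

lemma nuclearNorm_UDV (σ : Fin r → ℝ) (hσ : ∀ k, 0 ≤ σ k)
    (hU : Uᵀ * U = 1) (hV : Vᵀ * V = 1) :
    nuclearNorm (U * Matrix.diagonal σ * Vᵀ) = ∑ k, σ k := by
  apply le_antisymm
  · rw [← finner_dualW_self]
    exact finner_X_UDV_le U V σ hσ hU hV _ (spec_dualW_le_one _)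
  · calc ∑ k, σ k = finner (U * Vᵀ) (U * Matrix.diagonal σ * Vᵀ) :=
          (finner_UV_UDV U V σ hU hV).symm
      _ ≤ specNorm (U * Vᵀ) * nuclearNorm (U * Matrix.diagonal σ * Vᵀ) :=
          finner_le_spec_nuc _ _
      _ ≤ 1 * nuclearNorm (U * Matrix.diagonal σ * Vᵀ) :=
          mul_le_mul_of_nonneg_right (spec_UV_le_one U V hU hV) (nuclearNorm_nonneg _)
      _ = _ := one_mul _

lemma Ut_sub_projT (hU : Uᵀ * U = 1) (X : Matrix (Fin m) (Fin n) ℝ) :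
    Uᵀ * (X - projT U V X) = 0 := by
  rw [projT, Matrix.mul_sub]
  simp only [Matrix.mul_sub, Matrix.mul_add, ← Matrix.mul_assoc, hU, Matrix.one_mul]
  abel

lemma sub_projT_V (hV : Vᵀ * V = 1) (X : Matrix (Fin m) (Fin n) ℝ) :
    (X - projT U V X) * V = 0 := by
  rw [projT, Matrix.sub_mul]
  simp only [Matrix.sub_mul, Matrix.add_mul, Matrix.mul_assoc, hV, Matrix.mul_one]
  abel

lemma finner_W_projT (W : Matrix (Fin m) (Fin n) ℝ)
    (hUW : Uᵀ * W = 0) (hWV : W * V = 0) (X : Matrix (Fin m) (Fin n) ℝ) :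
    finner W (projT U V X) = 0 := by
  rw [projT, finner_sub_right, finner_add_right]
  have h1 : finner W (U * Uᵀ * X) = 0 := by
    rw [Matrix.mul_assoc, finner_comm, finner_mul_left_assoc, hUW, finner_zero_right]
  have h2 : finner W (X * (V * Vᵀ)) = 0 := by
    rw [← Matrix.mul_assoc, finner_comm, finner_mul_right_assoc, Matrix.transpose_transpose,
      hWV, finner_zero_right]
  have h3 : finner W (U * Uᵀ * X * (V * Vᵀ)) = 0 := by
    rw [Matrix.mul_assoc U, Matrix.mul_assoc U, finner_comm, finner_mul_left_assoc, hUW,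
      finner_zero_right]
  rw [h1, h2, h3]
  ring

lemma nuclear_subgrad (hU : Uᵀ * U = 1) (hV : Vᵀ * V = 1) (σ : Fin r → ℝ)
    (hσ : ∀ k, 0 ≤ σ k) (Δ : Matrix (Fin m) (Fin n) ℝ) :
    nuclearNorm (U * Matrix.diagonal σ * Vᵀ) + finner (U * Vᵀ) Δ
      + nuclearNorm (Δ - projT U V Δ)
      ≤ nuclearNorm (U * Matrix.diagonal σ * Vᵀ + Δ) := by
  set B := U * Matrix.diagonal σ * Vᵀ with hB
  set N := Δ - projT U V Δ with hN
  set W := dualW N with hW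
  have hUN : Uᵀ * N = 0 := Ut_sub_projT U V hU Δ
  have hNV : N * V = 0 := sub_projT_V U V hV Δ
  have hUW : Uᵀ * W = 0 := Ut_mul_dualW N U hUN
  have hWV : W * V = 0 := dualW_mul_V N V hNV
  have hspec : specNorm (U * Vᵀ + W) ≤ 1 := spec_UVW_le_one N U V hU hV hUN hNV
  have step1 : finner (U * Vᵀ + W) (B + Δ) ≤ nuclearNorm (B + Δ) := by
    calc finner (U * Vᵀ + W) (B + Δ)
        ≤ specNorm (U * Vᵀ + W) * nuclearNorm (B + Δ) := finner_le_spec_nuc _ _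
      _ ≤ 1 * nuclearNorm (B + Δ) :=
          mul_le_mul_of_nonneg_right hspec (nuclearNorm_nonneg _)
      _ = nuclearNorm (B + Δ) := one_mul _
  have expand : finner (U * Vᵀ + W) (B + Δ)
      = finner (U * Vᵀ) B + finner (U * Vᵀ) Δ + finner W B + finner W Δ := by
    rw [finner_add_left, finner_add_right, finner_add_right]
    ring
  have hUVB : finner (U * Vᵀ) B = nuclearNorm B := by
    rw [hB, finner_UV_UDV U V σ hU hV, nuclearNorm_UDV U V σ hσ hU hV]
  have hWB : finner W B = 0 := by
    rw [hB, Matrix.mul_assoc, finner_comm, finner_mul_left_assoc, hUW, finner_zero_right]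
  have hWΔ : finner W Δ = nuclearNorm N := by
    have hΔ : Δ = N + projT U V Δ := by rw [hN]; abel
    rw [hΔ, finner_add_right, finner_W_projT U V W hUW hWV, hW, finner_dualW_self, add_zero]
  rw [expand, hUVB, hWB, hWΔ] at step1
  linarith

end Subgrad

-- ===== main theorem =====
set_option maxHeartbeats 3000000 in
theorem stmt14 (n₁ n₂ r : ℕ) (γ : ℝ) (hγ : 0 < γ)
    (Φ Ω : Set (Fin n₁ × Fin n₂)) (hΩΦ : Ω ⊆ Φ)
    (Astar Bstar : Matrix (Fin n₁) (Fin n₂) ℝ)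
    (hAsupp : ∀ i j, Astar i j ≠ 0 → (i, j) ∈ Ω)
    (U : Matrix (Fin n₁) (Fin r) ℝ) (V : Matrix (Fin n₂) (Fin r) ℝ)
    (hU : Uᵀ * U = 1) (hV : Vᵀ * V = 1)
    (σ : Fin r → ℝ) (hσ : ∀ k, 0 < σ k)
    (hB : Bstar = U * Matrix.diagonal σ * Vᵀ)
    (Γ : Set (Fin n₁ × Fin n₂)) (hΓ : Γ = Φ \ Ω)
    (hTrans : ∀ M : Matrix (Fin n₁) (Fin n₂) ℝ,
      (∀ e ∈ Γ, M e.1 e.2 = 0) →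
      (∃ (X : Matrix (Fin n₂) (Fin r) ℝ) (Y : Matrix (Fin n₁) (Fin r) ℝ),
        M = U * Xᵀ + Y * Vᵀ) →
      M = 0)
    (Q : Matrix (Fin n₁) (Fin n₂) ℝ)
    (hQ1 : ∀ e : Fin n₁ × Fin n₂, e ∉ Φ → Q e.1 e.2 = 0)
    (hQ2 : projT U V Q = U * Vᵀ)
    (hQ3 : specNorm (Q - projT U V Q) < 1)
    (hQ4 : projSet Γᶜ Q = γ • projSet Φ (sgnM Astar))
    (hQ5 : ∀ e ∈ Γ, |Q e.1 e.2| < γ) :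
    ∀ A B : Matrix (Fin n₁) (Fin n₂) ℝ,
      projSet Φ (A + B) = projSet Φ (Astar + Bstar) →
      ¬(A = projSet Φ Astar ∧ B = Bstar) →
      γ * l1Norm (projSet Φ Astar) + nuclearNorm Bstar < γ * l1Norm A + nuclearNorm B := by
  classical
  intro A B hfeas hne
  by_contra hcon
  push_neg at hcon
  -- Notation
  set ΔA := A - Astar with hΔA
  set ΔB := B - Bstar with hΔB
  set N' := ΔB - projT U V ΔB with hN'
  have hσ' : ∀ k, 0 ≤ σ k := fun k => (hσ k).le
  -- Astar is supported on Φ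
  have hAΦ : projSet Φ Astar = Astar := by
    funext i j
    by_cases hij : (i, j) ∈ Φ
    · simp [projSet, hij]
    · simp only [projSet, Matrix.of_apply, if_neg hij]
      by_contra hc
      exact hij (hΩΦ (hAsupp i j fun h0 => hc h0.symm))
  -- the constraint
  have hconstr : projSet Φ (ΔA + ΔB) = 0 := by
    have h1 : (projSetL Φ) ((A + B) - (Astar + Bstar)) = 0 := by
      rw [map_sub]
      show projSet Φ (A + B) - projSet Φ (Astar + Bstar) = 0
      rw [hfeas, sub_self]
    have h2 : ΔA + ΔB = (A + B) - (Astar + Bstar) := by rw [hΔA, hΔB]; abel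
    rw [h2]
    exact h1
  have hconstr' : ∀ i j, (i, j) ∈ Φ → ΔA i j + ΔB i j = 0 := by
    intro i j hij
    have := congrFun (congrFun hconstr i) j
    simpa [projSet, hij] using this
  -- double-sum helpers
  have addsum : ∀ (f g : Fin n₁ → Fin n₂ → ℝ),
      ((∑ i, ∑ j, f i j) + ∑ i, ∑ j, g i j) = ∑ i, ∑ j, (f i j + g i j) := by
    intro f g
    rw [← Finset.sum_add_distrib]
    exact Finset.sum_congr rfl fun i _ => (Finset.sum_add_distrib).symm
  -- (P1) ℓ1 subgradient inequality
  have entryP1 : ∀ i j, |Astar i j| + Real.sign (Astar i j) * ΔA i j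
      + (if (i, j) ∈ Ωᶜ then |ΔA i j| else 0) ≤ |A i j| := by
    intro i j
    have hAij : A i j = Astar i j + ΔA i j := by simp [hΔA, Matrix.sub_apply]
    by_cases hΩe : (i, j) ∈ Ω
    · have hnc : (i, j) ∉ (Ωᶜ : Set (Fin n₁ × Fin n₂)) := fun hc => hc hΩe
      rw [if_neg hnc, add_zero]
      rcases lt_trichotomy (Astar i j) 0 with hlt | heq | hgt
      · rw [Real.sign_of_neg hlt, abs_of_neg hlt]
        have := neg_abs_le (A i j)
        rw [hAij] at this ⊢
        linarith
      · rw [heq, Real.sign_zero, abs_zero]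
        have := abs_nonneg (A i j)
        linarith
      · rw [Real.sign_of_pos hgt, abs_of_pos hgt]
        have := le_abs_self (A i j)
        rw [hAij] at this ⊢
        linarith
    · have hz : Astar i j = 0 := by
        by_contra hc; exact hΩe (hAsupp i j hc)
      have hc : (i, j) ∈ (Ωᶜ : Set (Fin n₁ × Fin n₂)) := hΩe
      rw [if_pos hc, hz, Real.sign_zero, abs_zero, hAij, hz]
      simp
  have hl1proj : l1Norm (projSet Ωᶜ ΔA) = ∑ i, ∑ j, (if (i, j) ∈ Ωᶜ then |ΔA i j| else 0) := by
    unfold l1Norm projSet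
    apply Finset.sum_congr rfl; intro i _
    apply Finset.sum_congr rfl; intro j _
    simp only [Matrix.of_apply, apply_ite abs, abs_zero]
  have P1 : l1Norm Astar + finner (sgnM Astar) ΔA + l1Norm (projSet Ωᶜ ΔA) ≤ l1Norm A := by
    have hs := Finset.sum_le_sum fun i (_ : i ∈ Finset.univ) =>
      Finset.sum_le_sum fun j (_ : j ∈ Finset.univ) => entryP1 i j
    calc l1Norm Astar + finner (sgnM Astar) ΔA + l1Norm (projSet Ωᶜ ΔA)
        = ∑ i, ∑ j, (|Astar i j| + Real.sign (Astar i j) * ΔA i j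
            + (if (i, j) ∈ Ωᶜ then |ΔA i j| else 0)) := by
          rw [hl1proj]
          unfold l1Norm finner sgnM
          rw [addsum, addsum]
          simp only [Matrix.of_apply]
      _ ≤ ∑ i, ∑ j, |A i j| := hs
      _ = l1Norm A := rfl
  -- (P2) nuclear subgradient inequality
  have P2 : nuclearNorm Bstar + finner (U * Vᵀ) ΔB + nuclearNorm N' ≤ nuclearNorm B := by
    have h := nuclear_subgrad U V hU hV σ hσ' ΔB
    rw [← hB] at h
    have hBB : Bstar + ΔB = B := by rw [hΔB]; abel
    rw [hBB] at h
    exact h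
  -- (c3) sign identity
  have hQpt : ∀ i j, Q i j = (if (i, j) ∈ Γ then Q i j else 0) + γ * Real.sign (Astar i j) := by
    intro i j
    by_cases hij : (i, j) ∈ Γ
    · have hΩe : (i, j) ∉ Ω := by
        rw [hΓ] at hij; exact hij.2
      have hz : Astar i j = 0 := by
        by_contra hc; exact hΩe (hAsupp i j hc)
      rw [if_pos hij, hz, Real.sign_zero]
      ring
    · have h4 := congrFun (congrFun hQ4 i) j
      have hmem : (i, j) ∈ Γᶜ := hij
      simp only [projSet, Matrix.of_apply, Matrix.smul_apply, sgnM, if_pos hmem,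
        smul_eq_mul] at h4
      rw [if_neg hij, zero_add]
      by_cases hΦe : (i, j) ∈ Φ
      · rw [h4, if_pos hΦe]
      · have hz : Astar i j = 0 := by
          by_contra hc; exact hΦe (hΩΦ (hAsupp i j hc))
        rw [h4, if_neg hΦe, hz, Real.sign_zero]
    -- end
  have c3 : γ * finner (sgnM Astar) ΔA = finner Q ΔA - finner (projSet Γ Q) ΔA := by
    unfold finner
    rw [Finset.mul_sum, ← Finset.sum_sub_distrib]
    apply Finset.sum_congr rfl; intro i _
    rw [Finset.mul_sum, ← Finset.sum_sub_distrib]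
    apply Finset.sum_congr rfl; intro j _
    have h := hQpt i j
    simp only [sgnM, Matrix.of_apply, projSet]
    linear_combination (-(ΔA i j)) * h
  -- (c4)
  have hWQU : Uᵀ * (Q - projT U V Q) = 0 := Ut_sub_projT U V hU Q
  have hWQV : (Q - projT U V Q) * V = 0 := sub_projT_V U V hV Q
  have c4 : finner (U * Vᵀ) ΔB = finner Q ΔB - finner (Q - projT U V Q) N' := by
    have hsplit : finner (Q - projT U V Q) ΔB = finner (Q - projT U V Q) N' := by
      have hd : ΔB = N' + projT U V ΔB := by rw [hN']; abel
      calc finner (Q - projT U V Q) ΔB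
          = finner (Q - projT U V Q) (N' + projT U V ΔB) := by rw [← hd]
        _ = finner (Q - projT U V Q) N' := by
            rw [finner_add_right, finner_W_projT U V _ hWQU hWQV ΔB, add_zero]
    rw [← hsplit, ← hQ2, finner_sub_left]
    ring
  -- (c5)
  have c5 : finner Q ΔA + finner Q ΔB = 0 := by
    unfold finner
    rw [addsum]
    apply Finset.sum_eq_zero; intro i _
    apply Finset.sum_eq_zero; intro j _
    by_cases hΦe : (i, j) ∈ Φ
    · have h := hconstr' i j hΦe
      linear_combination (Q i j) * h
    · rw [hQ1 (i, j) hΦe]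
      ring
  -- (c6) t1 entries
  set g : Fin n₁ → Fin n₂ → ℝ := fun i j =>
    γ * (if (i, j) ∈ Ωᶜ then |ΔA i j| else 0) - (if (i, j) ∈ Γ then Q i j else 0) * ΔA i j
    with hg
  have hg0 : ∀ i j, 0 ≤ g i j := by
    intro i j
    simp only [hg]
    by_cases hij : (i, j) ∈ Γ
    · have hΩe : (i, j) ∉ Ω := by rw [hΓ] at hij; exact hij.2
      have hc : (i, j) ∈ (Ωᶜ : Set (Fin n₁ × Fin n₂)) := hΩe
      rw [if_pos hij, if_pos hc]
      have h5 := (hQ5 (i, j) hij).le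
      have habs : Q i j * ΔA i j ≤ |Q i j| * |ΔA i j| := by
        calc Q i j * ΔA i j ≤ |Q i j * ΔA i j| := le_abs_self _
          _ = |Q i j| * |ΔA i j| := abs_mul _ _
      nlinarith [abs_nonneg (ΔA i j)]
    · rw [if_neg hij, zero_mul, sub_zero]
      by_cases hc : (i, j) ∈ (Ωᶜ : Set (Fin n₁ × Fin n₂))
      · rw [if_pos hc]; positivity
      · rw [if_neg hc]; simp
  have hgpos : ∀ i j, (i, j) ∉ Ω → ΔA i j ≠ 0 → 0 < g i j := by
    intro i j hΩe hne0
    simp only [hg]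
    have hc : (i, j) ∈ (Ωᶜ : Set (Fin n₁ × Fin n₂)) := hΩe
    rw [if_pos hc]
    have habspos : 0 < |ΔA i j| := abs_pos.mpr hne0
    by_cases hij : (i, j) ∈ Γ
    · rw [if_pos hij]
      have h5 := hQ5 (i, j) hij
      have habs : Q i j * ΔA i j ≤ |Q i j| * |ΔA i j| := by
        calc Q i j * ΔA i j ≤ |Q i j * ΔA i j| := le_abs_self _
          _ = |Q i j| * |ΔA i j| := abs_mul _ _
      nlinarith
    · rw [if_neg hij, zero_mul, sub_zero]
      positivity
  have hsum_g : γ * l1Norm (projSet Ωᶜ ΔA) - finner (projSet Γ Q) ΔA = ∑ i, ∑ j, g i j := by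
    rw [hl1proj]
    unfold finner
    rw [Finset.mul_sum, ← Finset.sum_sub_distrib]
    apply Finset.sum_congr rfl; intro i _
    rw [Finset.mul_sum, ← Finset.sum_sub_distrib]
    apply Finset.sum_congr rfl; intro j _
    simp only [hg, projSet, Matrix.of_apply]
  have c6 : finner (projSet Γ Q) ΔA ≤ γ * l1Norm (projSet Ωᶜ ΔA) := by
    have : 0 ≤ ∑ i, ∑ j, g i j :=
      Finset.sum_nonneg fun i _ => Finset.sum_nonneg fun j _ => hg0 i j
    linarith [hsum_g]
  -- (c7)
  have c7 : finner (Q - projT U V Q) N' ≤ nuclearNorm N' := by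
    calc finner (Q - projT U V Q) N'
        ≤ specNorm (Q - projT U V Q) * nuclearNorm N' := finner_le_spec_nuc _ _
      _ ≤ 1 * nuclearNorm N' :=
          mul_le_mul_of_nonneg_right hQ3.le (nuclearNorm_nonneg _)
      _ = nuclearNorm N' := one_mul _
  -- assemble the main chain
  have main : γ * l1Norm Astar + nuclearNorm Bstar
      + (γ * l1Norm (projSet Ωᶜ ΔA) - finner (projSet Γ Q) ΔA)
      + (nuclearNorm N' - finner (Q - projT U V Q) N')
      ≤ γ * l1Norm A + nuclearNorm B := by
    have h1 : γ * (l1Norm Astar + finner (sgnM Astar) ΔA + l1Norm (projSet Ωᶜ ΔA))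
        ≤ γ * l1Norm A := mul_le_mul_of_nonneg_left P1 hγ.le
    nlinarith [P2, c3, c4, c5, h1]
  rw [hAΦ] at hcon
  -- degenerate case analysis
  have ht1 : γ * l1Norm (projSet Ωᶜ ΔA) - finner (projSet Γ Q) ΔA = 0 := by
    have h2 : 0 ≤ nuclearNorm N' - finner (Q - projT U V Q) N' := by linarith
    have h1 : 0 ≤ γ * l1Norm (projSet Ωᶜ ΔA) - finner (projSet Γ Q) ΔA := by linarith
    linarith
  have ht2 : nuclearNorm N' - finner (Q - projT U V Q) N' = 0 := by
    have h1 : 0 ≤ γ * l1Norm (projSet Ωᶜ ΔA) - finner (projSet Γ Q) ΔA := by linarith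
    have h2 : 0 ≤ nuclearNorm N' - finner (Q - projT U V Q) N' := by linarith
    linarith
  -- N' = 0
  have hN'0 : N' = 0 := by
    by_contra hne0
    have hpos : 0 < nuclearNorm N' := by
      rcases lt_or_eq_of_le (nuclearNorm_nonneg N') with h | h
      · exact h
      · exact absurd (nuclearNorm_eq_zero_imp N' h.symm) hne0
    have : finner (Q - projT U V Q) N' < nuclearNorm N' := by
      calc finner (Q - projT U V Q) N'
          ≤ specNorm (Q - projT U V Q) * nuclearNorm N' := finner_le_spec_nuc _ _
        _ < 1 * nuclearNorm N' := by
            exact mul_lt_mul_of_pos_right hQ3 hpos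
        _ = nuclearNorm N' := one_mul _
    linarith
  -- ΔA vanishes off Ω
  have hΔAΩ : ∀ i j, (i, j) ∉ Ω → ΔA i j = 0 := by
    intro i j hΩe
    by_contra hne0
    have hpos : 0 < ∑ i, ∑ j, g i j := by
      apply Finset.sum_pos' (fun i _ => Finset.sum_nonneg fun j _ => hg0 i j)
      exact ⟨i, Finset.mem_univ i,
        Finset.sum_pos' (fun j _ => hg0 i j) ⟨j, Finset.mem_univ j, hgpos i j hΩe hne0⟩⟩
    rw [← hsum_g] at hpos
    linarith
  -- ΔB is in T and vanishes on Γ, hence is 0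
  have hΔBT : projT U V ΔB = ΔB := by
    have := hN'0
    rw [hN'] at this
    have := sub_eq_zero.mp this
    exact this.symm
  have hΔBΓ : ∀ e ∈ Γ, ΔB e.1 e.2 = 0 := by
    intro e he
    have hΦe : e ∈ Φ := by rw [hΓ] at he; exact he.1
    have hΩe : e ∉ Ω := by rw [hΓ] at he; exact he.2
    have h1 := hconstr' e.1 e.2 hΦe
    have h2 := hΔAΩ e.1 e.2 hΩe
    linarith
  have hΔB0 : ΔB = 0 := by
    apply hTrans ΔB hΔBΓ
    refine ⟨(Uᵀ * ΔB)ᵀ, (ΔB - U * Uᵀ * ΔB) * V, ?_⟩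
    rw [Matrix.transpose_transpose]
    calc ΔB = projT U V ΔB := hΔBT.symm
      _ = U * (Uᵀ * ΔB) + (ΔB - U * Uᵀ * ΔB) * V * Vᵀ := by
          rw [projT]
          simp only [Matrix.sub_mul, Matrix.mul_assoc]
          abel
  have hΔB0' : ΔB = 0 := hΔB0
  have hBeq : B = Bstar := by
    rw [hΔB] at hΔB0
    exact sub_eq_zero.mp hΔB0
  have hΔA0 : ΔA = 0 := by
    funext i j
    by_cases hΩe : (i, j) ∈ Ω
    · have hΦe : (i, j) ∈ Φ := hΩΦ hΩe
      have h1 := hconstr' i j hΦe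
      have h2 : ΔB i j = 0 := by rw [hΔB0']; rfl
      simp only [Matrix.zero_apply]
      linarith
    · exact hΔAΩ i j hΩe
  have hAeq : A = Astar := by
    rw [hΔA] at hΔA0
    exact sub_eq_zero.mp hΔA0
  exact hne ⟨hAeq.trans hAΦ.symm, hBeq⟩

end
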